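/- For the 1-Lipschitz function f_ε : [0, n] → ℝ defined by f_ε(x) = n^{1−2ε} − x for x ≤ m := n^{1−2ε} + a·n^{1−4ε}, and f_ε(x) = −a·n^{1−4ε} for x ≥ m (with suitable a = 1/2 + o(1) making the mean ∫₀^n f_ε dx = 0, and 0 < ε < 1/4, n large): the variance σ := √((1/n)∫₀^n f_ε² dx) satisfies σ = Θ(n^{1−3ε}), while f_ε(x) ∈ [−σ/4, σ/4] for all x ≥ n^{1−2ε} and n sufficiently large. -/

import Mathlib

open MeasureTheory

set_option maxHeartbeats 2000000 in
theorem stmt_17 (ε : ℝ) (hε0 : 0 < ε) (hε : ε < 1 / 4) :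
    ∃ c₁ c₂ : ℝ, 0 < c₁ ∧ 0 < c₂ ∧
      ∀ δ : ℝ, 0 < δ → ∃ n₀ : ℝ, 1 ≤ n₀ ∧
        ∀ n : ℝ, n₀ ≤ n → ∃ a : ℝ, |a - 1 / 2| ≤ δ ∧
          ∀ (m : ℝ), m = n ^ (1 - 2 * ε) + a * n ^ (1 - 4 * ε) →
          ∀ f : ℝ → ℝ,
            (f = fun x => if x ≤ m then n ^ (1 - 2 * ε) - x else -a * n ^ (1 - 4 * ε)) →
          ∀ σ : ℝ, σ = Real.sqrt ((1 / n) * ∫ x in Set.Icc (0 : ℝ) n, f x ^ 2) →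
            LipschitzOnWith 1 f (Set.Icc (0 : ℝ) n) ∧
            (∫ x in Set.Icc (0 : ℝ) n, f x) = 0 ∧
            c₁ * n ^ (1 - 3 * ε) ≤ σ ∧ σ ≤ c₂ * n ^ (1 - 3 * ε) ∧
            ∀ x ∈ Set.Icc (n ^ (1 - 2 * ε)) n, |f x| ≤ σ / 4 := by
  refine ⟨1/2, 1, by norm_num, by norm_num, ?_⟩
  intro δ hδ
  set δ' : ℝ := min δ (1/2) with hδ'def
  have hδ'0 : 0 < δ' := lt_min hδ (by norm_num)
  have hδ'le : δ' ≤ 1/2 := min_le_right _ _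
  have hδ'δ : δ' ≤ δ := min_le_left _ _
  clear_value δ'
  set T : ℝ := max 8 (2/δ') with hTdef
  have hT8 : (8:ℝ) ≤ T := le_max_left _ _
  have hT2 : 2/δ' ≤ T := le_max_right _ _
  have hT0 : (0:ℝ) < T := by linarith
  clear_value T
  refine ⟨max 2 (T ^ (1/ε)), le_trans (by norm_num) (le_max_left _ _), ?_⟩
  intro n hn
  have hn2 : (2:ℝ) ≤ n := le_trans (le_max_left _ _) hn
  have hn0 : (0:ℝ) < n := by linarith
  have hn1 : (1:ℝ) ≤ n := by linarith
  -- E := n ^ ε is large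
  set E : ℝ := n ^ ε with hEdef
  have hE0 : 0 < E := by rw [hEdef]; exact Real.rpow_pos_of_pos hn0 ε
  have hTE : T ≤ E := by
    rw [hEdef]
    have h1 : T ^ (1/ε) ≤ n := le_trans (le_max_right _ _) hn
    have h2 : (T ^ (1/ε)) ^ ε ≤ n ^ ε :=
      Real.rpow_le_rpow (Real.rpow_nonneg hT0.le _) h1 hε0.le
    rwa [← Real.rpow_mul hT0.le, one_div, inv_mul_cancel₀ hε0.ne', Real.rpow_one] at h2
  have hE8 : (8:ℝ) ≤ E := le_trans hT8 hTE
  have hEδ : 2/δ' ≤ E := le_trans hT2 hTE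
  have hδE : 2 ≤ δ' * E := by
    rw [div_le_iff₀ hδ'0] at hEδ; linarith [hEδ]
  set p : ℝ := n ^ (1 - 2 * ε) with hpdef
  set q : ℝ := n ^ (1 - 4 * ε) with hqdef
  set r : ℝ := n ^ (1 - 3 * ε) with hrdef
  have hp0 : 0 < p := by rw [hpdef]; exact Real.rpow_pos_of_pos hn0 _
  have hq0 : 0 < q := by rw [hqdef]; exact Real.rpow_pos_of_pos hn0 _
  have hr0 : 0 < r := by rw [hrdef]; exact Real.rpow_pos_of_pos hn0 _
  have hqp : q ≤ p := by rw [hpdef, hqdef]; exact Real.rpow_le_rpow_of_exponent_le hn1 (by linarith)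
  have hqn : q ≤ n := by
    rw [hqdef]
    have := Real.rpow_le_rpow_of_exponent_le hn1 (show 1 - 4*ε ≤ 1 by linarith)
    simpa using this
  -- multiplicative identities
  have hpE : p * E ^ 2 = n := by
    rw [hpdef, hEdef, sq, ← mul_assoc, ← Real.rpow_add hn0, ← Real.rpow_add hn0,
      show 1 - 2*ε + ε + ε = 1 by ring, Real.rpow_one]
  have hqE : q * E = r := by
    rw [hqdef, hEdef, hrdef, ← Real.rpow_add hn0, show 1 - 4*ε + ε = 1 - 3*ε by ring]
  have hrE : r * E = p := by
    rw [hpdef, hEdef, hrdef, ← Real.rpow_add hn0, show 1 - 3*ε + ε = 1 - 2*ε by ring]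
  have hp2 : p ^ 2 = n * q := by
    rw [hpdef, hqdef, sq, ← Real.rpow_add hn0,
      show 1 - 2*ε + (1 - 2*ε) = 1 + (1 - 4*ε) by ring, Real.rpow_add hn0, Real.rpow_one]
  have hp3 : p ^ 3 = n * r ^ 2 := by
    rw [hpdef, hrdef, pow_succ, sq, sq, ← Real.rpow_add hn0, ← Real.rpow_add hn0,
      show 1 - 2*ε + (1 - 2*ε) + (1 - 2*ε) = 1 + (1 - 3*ε + (1 - 3*ε)) by ring,
      Real.rpow_add hn0, Real.rpow_add hn0, Real.rpow_one]
  clear_value E p q r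
  -- p and q are small compared to n
  have hpn : 64 * p ≤ n := by
    have h : (8:ℝ)^2 ≤ E^2 := by nlinarith [hE8, hE0]
    have h2 := mul_le_mul_of_nonneg_left h hp0.le
    linarith [hpE, h2]
  have hqsmall : 64 * q ≤ n := by linarith [hqp]
  have h8q : 8 * q ≤ r := by
    have := mul_le_mul_of_nonneg_left hE8 hq0.le
    linarith [hqE]
  -- the square-root discriminant
  set S : ℝ := Real.sqrt ((n - p)^2 - n*q) with hSdef
  have hnp2 : n/2 ≤ n - p := by linarith
  have hd1 : (n/2)*(n/2) ≤ (n-p)*(n-p) := mul_le_mul hnp2 hnp2 (by linarith) (by linarith)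
  have hd2 : n*q ≤ n*(n/64) := mul_le_mul_of_nonneg_left (by linarith) hn0.le
  have hdisc : 0 ≤ (n - p)^2 - n*q := by nlinarith only [hd1, hd2]
  have hS2 : S^2 = (n - p)^2 - n*q := by rw [hSdef]; exact Real.sq_sqrt hdisc
  have hS0 : 0 ≤ S := by rw [hSdef]; exact Real.sqrt_nonneg _
  have hSle : S ≤ n - p := by
    rw [hSdef]
    calc Real.sqrt ((n - p)^2 - n*q) ≤ Real.sqrt ((n - p)^2) :=
          Real.sqrt_le_sqrt (by linarith only [mul_pos hn0 hq0])
      _ = |n - p| := Real.sqrt_sq_eq_abs _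
      _ = n - p := abs_of_nonneg (by linarith)
  have hSge : n - p - (4/3)*q ≤ S := by
    have h1 : (n - p - (4/3)*q)^2 ≤ (n - p)^2 - n*q := by
      have e1 : q*(n/2) ≤ q*(n - p) := mul_le_mul_of_nonneg_left hnp2 hq0.le
      have e3 : q*(64*q) ≤ q*n := mul_le_mul_of_nonneg_left (by linarith only [hqsmall]) hq0.le
      nlinarith only [e1, e3, mul_pos hn0 hq0]
    rw [hSdef]
    calc n - p - (4/3)*q ≤ |n - p - (4/3)*q| := le_abs_self _
      _ = Real.sqrt ((n - p - (4/3)*q)^2) := (Real.sqrt_sq_eq_abs _).symm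
      _ ≤ Real.sqrt ((n - p)^2 - n*q) := Real.sqrt_le_sqrt h1
  clear_value S
  set D : ℝ := (n - p) + S with hDdef
  have hDub : D ≤ 2 * n := by simp only [hDdef]; linarith only [hSle, hp0]
  have hDlb : 2*n - 2*p - (4/3)*q ≤ D := by simp only [hDdef]; linarith
  have hD0 : 0 < D := by simp only [hDdef]; linarith only [hS0, hnp2, hn0]
  have hDq : D^2 = 2*(n-p)*D - n*q := by
    rw [hDdef]; linear_combination hS2
  clear_value D
  set a : ℝ := n / D with hadef
  have ha_half : 1/2 ≤ a := by
    rw [hadef, le_div_iff₀ hD0]; linarith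
  -- p, q ≤ n * δ'^2 / 4
  have hp_small : 4 * p ≤ n * δ'^2 := by
    have h : (2:ℝ)^2 ≤ (δ' * E)^2 := pow_le_pow_left₀ (by norm_num) hδE 2
    have h2 := mul_le_mul_of_nonneg_left h hp0.le
    have h3 : p * (δ'*E)^2 = n * δ'^2 := by
      rw [show p*(δ'*E)^2 = δ'^2*(p*E^2) by ring, hpE]; ring
    linarith only [h2, h3]
  have hq_small : 4 * q ≤ n * δ'^2 := by linarith only [hqp, hp_small]
  have ha_ub : a ≤ 1/2 + δ' := by
    rw [hadef, div_le_iff₀ hD0]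
    have hD' : 2*n - (5/6)*(n*δ'^2) ≤ D := by linarith only [hDlb, hp_small, hq_small]
    have hsq : δ'^2 ≤ δ'*(1/2) := by
      rw [sq]; exact mul_le_mul_of_nonneg_left hδ'le hδ'0.le
    have hcube : (5/12)*δ' + (5/6)*δ'^2 ≤ 2 := by linarith only [hsq, hδ'0, hδ'le]
    have hfac : 0 ≤ δ'*n*(2 - (5/12)*δ' - (5/6)*δ'^2) :=
      mul_nonneg (mul_nonneg hδ'0.le hn0.le) (by linarith only [hcube])
    have key : (1/2+δ')*(2*n - (5/6)*(n*δ'^2)) - n = δ'*n*(2 - (5/12)*δ' - (5/6)*δ'^2) := by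
      ring
    have hmul := mul_le_mul_of_nonneg_left hD' (by linarith only [hδ'0] : (0:ℝ) ≤ 1/2+δ')
    linarith only [hfac, key, hmul]
  have ha1 : a ≤ 1 := by linarith
  have haD : a * D = n := by rw [hadef]; field_simp
  -- the quadratic identity for D and a
  have haq : q * a^2 - 2*(n-p)*a + n = 0 := by
    have h4 : (q*a^2 - 2*(n-p)*a + n) * D^2 = 0 := by
      have e : (q*a^2 - 2*(n-p)*a + n) * D^2
          = q*(a*D)^2 - 2*(n-p)*(a*D)*D + n*D^2 := by ring
      rw [e, haD]; linear_combination n * hDq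
    exact (mul_eq_zero.mp h4).resolve_right (pow_ne_zero 2 hD0.ne')
  clear_value a
  refine ⟨a, ?_, ?_⟩
  · rw [abs_le]; constructor <;> linarith
  intro m hm f hf σ hσ
  subst hm hf hσ
  set m : ℝ := p + a * q with hmdef
  have haq0 : 0 ≤ a * q := mul_nonneg (by linarith only [ha_half]) hq0.le
  have haqq : a * q ≤ q := by
    have := mul_le_mul_of_nonneg_right ha1 hq0.le
    linarith only [this]
  have hm0 : 0 ≤ m := by rw [hmdef]; linarith only [haq0, hp0]
  have hmn : m ≤ n := by rw [hmdef]; linarith only [haqq, hpn, hqsmall, hn0, hp0, hq0]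
  clear_value m
  -- f equals a max
  have hfmax : ∀ x : ℝ, (if x ≤ m then p - x else -a * q) = max (p - x) (-(a*q)) := by
    intro x
    by_cases hx : x ≤ m
    · rw [if_pos hx, max_eq_left]; rw [hmdef] at hx; linarith
    · rw [if_neg hx, max_eq_right] <;> push_neg at hx
      · ring
      · rw [hmdef] at hx; linarith
  have hcont : Continuous fun x : ℝ => if x ≤ m then p - x else -a * q := by
    have : (fun x : ℝ => if x ≤ m then p - x else -a * q)
        = fun x => max (p - x) (-(a*q)) := funext hfmax
    rw [this]
    exact (continuous_const.sub continuous_id).max continuous_const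
  -- the Lipschitz property
  have hlip : LipschitzOnWith 1 (fun x : ℝ => if x ≤ m then p - x else -a * q)
      (Set.Icc (0:ℝ) n) := by
    apply LipschitzWith.lipschitzOnWith
    apply LipschitzWith.of_dist_le_mul
    intro x y
    rw [NNReal.coe_one, one_mul, Real.dist_eq, Real.dist_eq, hfmax x, hfmax y]
    calc |max (p - x) (-(a*q)) - max (p - y) (-(a*q))| ≤ |(p - x) - (p - y)| :=
          abs_max_sub_max_le_abs _ _ _
      _ = |x - y| := by rw [show (p - x) - (p - y) = -(x - y) by ring, abs_neg]
  -- integral computations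
  have hIcc1 : (∫ x in Set.Icc (0:ℝ) n, (if x ≤ m then p - x else -a * q))
      = ∫ x in (0:ℝ)..n, (if x ≤ m then p - x else -a * q) := by
    rw [MeasureTheory.integral_Icc_eq_integral_Ioc,
      intervalIntegral.integral_of_le (by linarith : (0:ℝ) ≤ n)]
  have hIcc2 : (∫ x in Set.Icc (0:ℝ) n, (if x ≤ m then p - x else -a * q)^2)
      = ∫ x in (0:ℝ)..n, (if x ≤ m then p - x else -a * q)^2 := by
    rw [MeasureTheory.integral_Icc_eq_integral_Ioc,
      intervalIntegral.integral_of_le (by linarith : (0:ℝ) ≤ n)]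
  have hint1 : IntervalIntegrable (fun x : ℝ => if x ≤ m then p - x else -a * q)
      MeasureTheory.volume 0 m := hcont.intervalIntegrable _ _
  have hint2 : IntervalIntegrable (fun x : ℝ => if x ≤ m then p - x else -a * q)
      MeasureTheory.volume m n := hcont.intervalIntegrable _ _
  have hint1' : IntervalIntegrable (fun x : ℝ => (if x ≤ m then p - x else -a * q)^2)
      MeasureTheory.volume 0 m := (hcont.pow 2).intervalIntegrable _ _
  have hint2' : IntervalIntegrable (fun x : ℝ => (if x ≤ m then p - x else -a * q)^2)
      MeasureTheory.volume m n := (hcont.pow 2).intervalIntegrable _ _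
  have hsplit1 : (∫ x in (0:ℝ)..n, (if x ≤ m then p - x else -a * q))
      = (∫ x in (0:ℝ)..m, (if x ≤ m then p - x else -a * q))
        + ∫ x in m..n, (if x ≤ m then p - x else -a * q) :=
    (intervalIntegral.integral_add_adjacent_intervals hint1 hint2).symm
  have hsplit2 : (∫ x in (0:ℝ)..n, (if x ≤ m then p - x else -a * q)^2)
      = (∫ x in (0:ℝ)..m, (if x ≤ m then p - x else -a * q)^2)
        + ∫ x in m..n, (if x ≤ m then p - x else -a * q)^2 :=
    (intervalIntegral.integral_add_adjacent_intervals hint1' hint2').symm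
  have hcongr1 : ∀ x ∈ Set.uIcc (0:ℝ) m, (if x ≤ m then p - x else -a * q) = p - x := by
    intro x hx
    rw [Set.uIcc_of_le hm0] at hx
    rw [if_pos hx.2]
  have hcongr2 : ∀ x ∈ Set.uIcc m n, (if x ≤ m then p - x else -a * q) = -a * q := by
    intro x hx
    rw [Set.uIcc_of_le hmn] at hx
    by_cases hxm : x ≤ m
    · have : x = m := le_antisymm hxm hx.1
      rw [if_pos hxm, this, hmdef]; ring
    · rw [if_neg hxm]
  have hI1a : (∫ x in (0:ℝ)..m, (if x ≤ m then p - x else -a * q))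
      = p * m - m^2/2 := by
    rw [intervalIntegral.integral_congr hcongr1]
    rw [intervalIntegral.integral_sub (intervalIntegrable_const) intervalIntegral.intervalIntegrable_id]
    rw [intervalIntegral.integral_const, integral_id]
    simp; ring
  have hI1b : (∫ x in m..n, (if x ≤ m then p - x else -a * q)) = (n - m) * (-a * q) := by
    rw [intervalIntegral.integral_congr hcongr2, intervalIntegral.integral_const, smul_eq_mul]
  have hI2a : (∫ x in (0:ℝ)..m, (if x ≤ m then p - x else -a * q)^2)
      = (p^3 - (p - m)^3)/3 := by
    have : (∫ x in (0:ℝ)..m, (if x ≤ m then p - x else -a * q)^2)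
        = ∫ x in (0:ℝ)..m, (p - x)^2 := by
      apply intervalIntegral.integral_congr
      intro x hx
      show (if x ≤ m then p - x else -a * q)^2 = (p - x)^2
      rw [hcongr1 x hx]
    have hc : (∫ x in (0:ℝ)..m, (p - x)^2) = ∫ x in (p - m)..(p - 0), x^2 :=
      intervalIntegral.integral_comp_sub_left (fun y => y^2) p
    rw [this, hc, integral_pow]
    norm_num
  have hI2b : (∫ x in m..n, (if x ≤ m then p - x else -a * q)^2)
      = (n - m) * (a*q)^2 := by
    have : (∫ x in m..n, (if x ≤ m then p - x else -a * q)^2)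
        = ∫ x in m..n, (-a*q)^2 := by
      apply intervalIntegral.integral_congr
      intro x hx
      show (if x ≤ m then p - x else -a * q)^2 = (-a*q)^2
      rw [hcongr2 x hx]
    rw [this, intervalIntegral.integral_const, smul_eq_mul]; ring
  have hI2val : (∫ x in Set.Icc (0:ℝ) n, (if x ≤ m then p - x else -a * q)^2)
      = (p^3 + (a*q)^3)/3 + (n - m)*(a*q)^2 := by
    rw [hIcc2, hsplit2, hI2a, hI2b, hmdef]; ring
  have hI2lb : n * r^2 / 4 ≤ (p^3 + (a*q)^3)/3 + (n - m)*(a*q)^2 := by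
    have t1 : 0 ≤ (a*q)^3 := pow_nonneg haq0 3
    have t2 : 0 ≤ (n - m)*(a*q)^2 := mul_nonneg (by linarith only [hmn]) (sq_nonneg _)
    have t3 : 0 ≤ n * r^2 := mul_nonneg hn0.le (sq_nonneg r)
    linarith only [t1, t2, t3, hp3]
  have hI2ub : (p^3 + (a*q)^3)/3 + (n - m)*(a*q)^2 ≤ n * r^2 := by
    have hq2r2 : q^2 ≤ r^2 := pow_le_pow_left₀ hq0.le (by linarith only [h8q, hq0]) 2
    have h1 : (a*q)^3 ≤ n * r^2 := by
      calc (a*q)^3 ≤ q^3 := pow_le_pow_left₀ haq0 haqq 3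
        _ = q * q^2 := by ring
        _ ≤ n * r^2 := mul_le_mul hqn hq2r2 (sq_nonneg q) hn0.le
    have h2 : (n - m)*(a*q)^2 ≤ n * q^2 := by
      have hb : (a*q)^2 ≤ q^2 := pow_le_pow_left₀ haq0 haqq 2
      exact mul_le_mul (by linarith only [hm0]) hb (sq_nonneg _) hn0.le
    have h3 : 3 * (n * q^2) ≤ n * r^2 / 2 := by
      have hbig : (8*q)^2 ≤ r^2 := pow_le_pow_left₀ (by positivity) h8q 2
      have := mul_le_mul_of_nonneg_left hbig hn0.le
      linarith only [this, mul_nonneg hn0.le (sq_nonneg q)]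
    linarith only [hp3, h1, h2, h3, mul_nonneg hn0.le (sq_nonneg r)]
  constructor
  · exact hlip
  constructor
  · rw [hIcc1, hsplit1, hI1a, hI1b, hmdef]
    linear_combination (q/2) * haq + (1/2) * hp2
  have hσval : Real.sqrt ((1/n) * ∫ x in Set.Icc (0:ℝ) n, (if x ≤ m then p - x else -a * q)^2)
      = Real.sqrt ((1/n) * ((p^3 + (a*q)^3)/3 + (n - m)*(a*q)^2)) := by rw [hI2val]
  have harg_lb : r^2/4 ≤ (1/n) * ((p^3 + (a*q)^3)/3 + (n - m)*(a*q)^2) := by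
    rw [show (1/n) * ((p^3 + (a*q)^3)/3 + (n - m)*(a*q)^2)
        = ((p^3 + (a*q)^3)/3 + (n - m)*(a*q)^2) / n by ring, le_div_iff₀ hn0]
    nlinarith only [hI2lb]
  have harg_ub : (1/n) * ((p^3 + (a*q)^3)/3 + (n - m)*(a*q)^2) ≤ r^2 := by
    rw [show (1/n) * ((p^3 + (a*q)^3)/3 + (n - m)*(a*q)^2)
        = ((p^3 + (a*q)^3)/3 + (n - m)*(a*q)^2) / n by ring, div_le_iff₀ hn0]
    nlinarith only [hI2ub]
  have hσ_lb : r/2 ≤ Real.sqrt ((1/n) * ((p^3 + (a*q)^3)/3 + (n - m)*(a*q)^2)) := by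
    rw [Real.le_sqrt (by linarith only [hr0] : (0:ℝ) ≤ r/2)
      (by nlinarith only [harg_lb, sq_nonneg r])]
    nlinarith only [harg_lb]
  have hσ_ub : Real.sqrt ((1/n) * ((p^3 + (a*q)^3)/3 + (n - m)*(a*q)^2)) ≤ r := by
    calc Real.sqrt ((1/n) * ((p^3 + (a*q)^3)/3 + (n - m)*(a*q)^2))
        ≤ Real.sqrt (r^2) := Real.sqrt_le_sqrt harg_ub
      _ = r := Real.sqrt_sq hr0.le
  rw [hσval]
  refine ⟨by linarith [hσ_lb], by linarith [hσ_ub], ?_⟩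
  intro x hx
  obtain ⟨hx1, hx2⟩ := hx
  rw [show (fun x => if x ≤ m then p - x else -a * q) x = max (p - x) (-(a*q)) from hfmax x]
  have h1 : max (p - x) (-(a*q)) ≤ 0 := by
    refine max_le (by linarith only [hx1]) (by linarith only [haq0])
  have h2 : -(a*q) ≤ max (p - x) (-(a*q)) := le_max_right _ _
  have haqr : a * q ≤ r/8 := by linarith only [haqq, h8q]
  rw [abs_le]
  constructor <;> linarith only [h1, h2, haqr, hσ_lb]
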